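/- Let A be an n×n matrix over GF(3). Then every principal submatrix of A has even rank if and only if A is skew-symmetric up to multiplication of rows and columns by -1. -/

import Mathlib

open Matrix

private lemma gf3_mul_unit (x y : ZMod 3) (hx : x = 1 ∨ x = -1) (hy : y = 1 ∨ y = -1) :
    x * y = 1 ∨ x * y = -1 := by rcases hx with rfl | rfl <;> rcases hy with rfl | rfl <;> decide

private lemma gf3_cases (x : ZMod 3) (hx : x ≠ 0) : x = 1 ∨ x = -1 := by revert hx; revert x; decide
private lemma gf3_sq (x : ZMod 3) (hx : x ≠ 0) : x * x = 1 := by revert hx; revert x; decide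
private lemma gf3_neg_self (a : ZMod 3) (h : a = -a) : a = 0 := by revert h; revert a; decide

private lemma prod_range_zmod (k : ℕ) [NeZero k] (f : ZMod k → ZMod 3) :
    ∏ t ∈ Finset.range k, f (t : ZMod k) = ∏ i : ZMod k, f i := by
  exact Finset.prod_nbij' (i := fun t => (t : ZMod k)) (j := fun z => z.val)
    (fun a _ => Finset.mem_univ _) (fun z _ => Finset.mem_range.mpr z.val_lt)
    (fun a ha => ZMod.val_natCast_of_lt (Finset.mem_range.mp ha))
    (fun z _ => ZMod.natCast_rightInverse z) (fun a _ => rfl)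

private lemma prod_range_even_odd {α : Type*} [CommMonoid α] (f : ℕ → α) (m : ℕ) :
    (∏ t ∈ Finset.range m, f (2*t)) * (∏ t ∈ Finset.range m, f (2*t+1))
      = ∏ s ∈ Finset.range (2*m), f s := by
  induction m with
  | zero => simp
  | succ m ih =>
    rw [Finset.prod_range_succ, Finset.prod_range_succ]
    have h2 : 2 * (m+1) = (2*m + 1) + 1 := by ring
    rw [h2, Finset.prod_range_succ, Finset.prod_range_succ, ← ih]
    ac_rfl

private theorem cycle_rank (k : ℕ) (hk : 3 ≤ k) [NeZero k] (M : Matrix (ZMod k) (ZMod k) (ZMod 3))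
    (h1 : ∀ i, M i (i+1) ≠ 0) (h2 : ∀ i, M (i+1) i ≠ 0)
    (h0 : ∀ i j, j ≠ i + 1 → i ≠ j + 1 → M i j = 0)
    (heven : Even M.rank) : ∏ i : ZMod k, -(M i (i+1) * M (i+1) i) = 1 := by
  set b : ZMod k → ZMod 3 := fun i => M i (i+1) with hb
  set c : ZMod k → ZMod 3 := fun i => M (i+1) i with hc
  have hbne : ∀ i, b i ≠ 0 := h1
  have hcne : ∀ i, c i ≠ 0 := h2
  set ρ : ZMod k → ZMod 3 := fun i => -(b i * c (i-1)) with hρ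
  have hρne : ∀ i, ρ i ≠ 0 := fun i => neg_ne_zero.mpr (mul_ne_zero (hbne i) (hcne (i-1)))
  have hMic : ∀ i : ZMod k, M i (i-1) = c (i-1) := by
    intro i; rw [hc]; simp
  have hpairne : ∀ i : ZMod k, (i + 1) ≠ (i - 1) := by
    intro i h
    have h2' : ((2:ℕ) : ZMod k) = 0 := by
      have := sub_eq_zero.mpr h
      push_cast
      linear_combination this
    rw [ZMod.natCast_eq_zero_iff] at h2'
    have := Nat.le_of_dvd (by norm_num) h2'
    omega
  -- row computation
  have hrow : ∀ (x : ZMod k → ZMod 3) (i : ZMod k),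
      (M *ᵥ x) i = b i * x (i+1) + c (i-1) * x (i-1) := by
    intro x i
    have hsub : ({i+1, i-1} : Finset (ZMod k)) ⊆ Finset.univ := Finset.subset_univ _
    have hz : ∀ j ∈ Finset.univ, j ∉ ({i+1, i-1} : Finset (ZMod k)) → M i j * x j = 0 := by
      intro j _ hj
      simp only [Finset.mem_insert, Finset.mem_singleton] at hj
      push_neg at hj
      have : M i j = 0 := by
        apply h0 i j hj.1
        intro h
        apply hj.2
        rw [h]; ring
      rw [this, zero_mul]
    have : (M *ᵥ x) i = ∑ j ∈ ({i+1, i-1} : Finset (ZMod k)), M i j * x j := by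
      simp only [Matrix.mulVec, dotProduct]
      exact (Finset.sum_subset hsub hz).symm
    rw [this, Finset.sum_pair (hpairne i), hMic, hb]
  -- kernel recurrence
  have hker : ∀ (x : ZMod k → ZMod 3), M *ᵥ x = 0 → ∀ z : ZMod k, x (z + 2) = ρ (z+1) * x z := by
    intro x hx z
    have h := congrFun hx (z+1)
    rw [hrow] at h
    have hb2 := gf3_sq (b (z+1)) (hbne (z+1))
    have e1 : z + 1 + 1 = z + 2 := by ring
    have e2 : z + 1 - 1 = z := by ring
    rw [e1, e2] at h
    have : x (z+2) = b (z+1) * (b (z+1) * x (z+2)) := by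
      rw [← mul_assoc, hb2, one_mul]
    rw [this]
    have hbx : b (z+1) * x (z+2) = -(c z * x z) := by
      simp only [Pi.zero_apply] at h
      linear_combination h
    have hρz : ρ (z+1) = -(b (z+1) * c z) := by
      simp only [hρ]
      rw [add_sub_cancel_right]
    rw [hbx, hρz]; ring
  -- chain products
  set g : ZMod k → ℕ → ZMod 3 := fun a l => ∏ t ∈ Finset.range l, ρ (a + 2*(t:ZMod k) + 1) with hg
  have hgne : ∀ a l, g a l ≠ 0 := by
    intro a l
    rw [hg]
    exact Finset.prod_ne_zero_iff.mpr (fun t _ => hρne _)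
  have K1 : ∀ (x : ZMod k → ZMod 3), M *ᵥ x = 0 → ∀ (a : ZMod k) (l : ℕ),
      x (a + 2*(l : ZMod k)) = g a l * x a := by
    intro x hx a l
    induction l with
    | zero => simp [hg]
    | succ l ih =>
      have hgsucc : g a (l+1) = g a l * ρ (a + 2*(l:ZMod k) + 1) := by
        simp only [hg, Finset.prod_range_succ]
      push_cast
      have e1 : a + 2 * ((l:ZMod k) + 1) = (a + 2*(l:ZMod k)) + 2 := by ring
      rw [e1, hker x hx, ih, hgsucc]
      ring
  -- product identity
  have P1 : ∏ i : ZMod k, ρ i = ∏ i : ZMod k, -(b i * c i) := by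
    have e1 : ∀ i : ZMod k, ρ i = (-(b i)) * c (i - 1) := fun i => by rw [hρ]; ring
    have e2 : ∀ i : ZMod k, -(b i * c i) = (-(b i)) * c i := fun i => by ring
    rw [Finset.prod_congr rfl (fun i _ => e1 i), Finset.prod_congr rfl (fun i _ => e2 i),
      Finset.prod_mul_distrib, Finset.prod_mul_distrib]
    congr 1
    exact Fintype.prod_equiv (Equiv.subRight (1 : ZMod k)) _ _ (fun i => rfl)
  have hPne : (∏ i : ZMod k, -(b i * c i)) ≠ 0 :=
    Finset.prod_ne_zero_iff.mpr fun i _ => neg_ne_zero.mpr (mul_ne_zero (hbne i) (hcne i))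
  rcases gf3_cases _ hPne with hP1 | hPm1
  · exact hP1
  exfalso
  have hrm1 : ∏ i : ZMod k, ρ i = -1 := by rw [P1]; exact hPm1
  have hdim : Module.finrank (ZMod 3) (ZMod k → ZMod 3) = k := by
    rw [Module.finrank_pi]; exact ZMod.card k
  rcases Nat.even_or_odd k with hkeven | hkodd
  · -- EVEN CASE
    obtain ⟨m, hm⟩ := hkeven
    have hm2 : 2 ≤ m := by omega
    have hposcast : ∀ a l : ℕ, ((a + 2*l : ℕ) : ZMod k) = (a : ZMod k) + 2*(l : ZMod k) := by
      intro a l; push_cast; ring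
    have h2m : 2 * ((m:ℕ) : ZMod k) = 0 := by
      have e : ((2*m : ℕ) : ZMod k) = 2 * ((m:ℕ) : ZMod k) := by push_cast; ring
      rw [← e, show 2*m = k by omega, ZMod.natCast_self]
    have hFmul : g 0 m * g 1 m = -1 := by
      have hmerge := prod_range_even_odd (fun s => ρ ((s : ZMod k) + 1)) m
      have e1 : g 0 m = ∏ t ∈ Finset.range m, ρ (((2*t : ℕ) : ZMod k) + 1) := by
        simp only [hg]
        refine Finset.prod_congr rfl fun t _ => ?_
        congr 1
        push_cast
        ring
      have e2 : g 1 m = ∏ t ∈ Finset.range m, ρ (((2*t+1 : ℕ) : ZMod k) + 1) := by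
        simp only [hg]
        refine Finset.prod_congr rfl fun t _ => ?_
        congr 1
        push_cast
        ring
      rw [e1, e2, hmerge, show 2*m = k by omega, prod_range_zmod k (fun z => ρ (z + 1))]
      have hshift : ∏ i : ZMod k, ρ (i + 1) = ∏ i : ZMod k, ρ i :=
        Fintype.prod_equiv (Equiv.addRight (1 : ZMod k)) (fun i => ρ (i + 1)) ρ (fun x => rfl)
      rw [hshift]
      exact hrm1
    obtain ⟨a0, a1, ha0le, ha1le, hane, hF0, hF1⟩ :
        ∃ a0 a1 : ℕ, a0 ≤ 1 ∧ a1 ≤ 1 ∧ a0 ≠ a1 ∧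
          g ((a0:ℕ) : ZMod k) m = 1 ∧ g ((a1:ℕ) : ZMod k) m = -1 := by
      rcases gf3_cases _ (hgne 0 m) with h | h
      · refine ⟨0, 1, by omega, by omega, by omega, by simpa using h, ?_⟩
        have h' := hFmul; rw [h, one_mul] at h'; simpa using h'
      · refine ⟨1, 0, by omega, by omega, by omega, ?_, by simpa using h⟩
        rw [h] at hFmul
        have hg1 : g 1 m = 1 := by linear_combination -hFmul
        simpa using hg1
    have hmod : ∀ (p q : ℕ), p < k → q < k → ((p : ZMod k) = (q : ZMod k)) → p = q := by
      intro p q hp hq h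
      have h' := (ZMod.natCast_eq_natCast_iff p q k).mp h
      rw [Nat.ModEq, Nat.mod_eq_of_lt hp, Nat.mod_eq_of_lt hq] at h'
      exact h'
    have huniq : ∀ (a l1 l2 : ℕ), a ≤ 1 → l1 < m → l2 < m →
        ((a + 2*l1 : ℕ) : ZMod k) = ((a + 2*l2 : ℕ) : ZMod k) → l1 = l2 := by
      intro a l1 l2 ha hl1 hl2 h
      have := hmod _ _ (by omega) (by omega) h
      omega
    have hdisj : ∀ (l1 l2 : ℕ), l1 < m → l2 < m →
        ((a0 + 2*l1 : ℕ) : ZMod k) ≠ ((a1 + 2*l2 : ℕ) : ZMod k) := by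
      intro l1 l2 hl1 hl2 h
      have := hmod _ _ (by omega) (by omega) h
      omega
    have hdec : ∀ j : ZMod k, ∃ a l : ℕ, a ≤ 1 ∧ l < m ∧ ((a + 2*l : ℕ) : ZMod k) = j := by
      intro j
      have hjv := j.val_lt
      rcases Nat.even_or_odd j.val with ⟨l, hl⟩ | ⟨l, hl⟩
      · exact ⟨0, l, by omega, by omega, by
          rw [show (0 + 2*l) = j.val by omega]; exact ZMod.natCast_rightInverse j⟩
      · exact ⟨1, l, by omega, by omega, by
          rw [show (1 + 2*l) = j.val by omega]; exact ZMod.natCast_rightInverse j⟩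
    classical
    set v : ZMod k → ZMod 3 := fun j =>
      if h : ∃ l : ℕ, l < m ∧ ((a0 + 2*l : ℕ) : ZMod k) = j then g ((a0:ℕ) : ZMod k) h.choose
      else 0 with hvdef
    have hvval : ∀ l : ℕ, l < m → v (((a0 + 2*l : ℕ) : ZMod k)) = g ((a0:ℕ) : ZMod k) l := by
      intro l hl
      have hex : ∃ l' : ℕ, l' < m ∧ ((a0 + 2*l' : ℕ) : ZMod k) = ((a0 + 2*l : ℕ) : ZMod k) :=
        ⟨l, hl, rfl⟩
      simp only [hvdef]
      rw [dif_pos hex]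
      have hspec := hex.choose_spec
      rw [huniq a0 hex.choose l ha0le hspec.1 hl hspec.2]
    have hvout : ∀ l : ℕ, l < m → v (((a1 + 2*l : ℕ) : ZMod k)) = 0 := by
      intro l hl
      simp only [hvdef]
      rw [dif_neg]
      rintro ⟨l', hl', heq⟩
      exact hdisj l' l hl' hl heq
    have hx1 : ∀ x, M *ᵥ x = 0 → x (((a1:ℕ)) : ZMod k) = 0 := by
      intro x hx
      have h' := K1 x hx ((a1:ℕ) : ZMod k) m
      rw [h2m, add_zero, hF1] at h'
      exact gf3_neg_self _ (by linear_combination h')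
    have hvker : M *ᵥ v = 0 := by
      funext i
      simp only [Pi.zero_apply]
      rw [hrow]
      by_cases hca : ∃ l : ℕ, l < m ∧ ((a0 + 2*l : ℕ) : ZMod k) = i - 1
      · obtain ⟨l, hl, hpos⟩ := hca
        have hi : i = ((a0 + 2*l : ℕ) : ZMod k) + 1 := by rw [hpos]; ring
        have hip : i + 1 = ((a0 + 2*(l+1) : ℕ) : ZMod k) := by rw [hi]; push_cast; ring
        have hv1 : v (i + 1) = g ((a0:ℕ) : ZMod k) (l+1) := by
          by_cases hlm : l + 1 < m
          · rw [hip]; exact hvval (l+1) hlm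
          · have hlm' : l + 1 = m := by omega
            have e : ((a0 + 2*(l+1) : ℕ) : ZMod k) = ((a0 + 2*0 : ℕ) : ZMod k) := by
              rw [hlm', hposcast, hposcast, h2m]
              push_cast
              ring
            rw [hip, e, hvval 0 (by omega), hlm', hF0]
            simp [hg]
        have hvm : v (i - 1) = g ((a0:ℕ) : ZMod k) l := by rw [← hpos]; exact hvval l hl
        have hρi : ρ i = -(b i * c (i-1)) := by simp only [hρ]
        have hgs : g ((a0:ℕ) : ZMod k) (l+1) = g ((a0:ℕ) : ZMod k) l * ρ i := by
          simp only [hg, Finset.prod_range_succ]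
          congr 1
          rw [hi, hposcast]
        rw [hv1, hvm, hgs, hρi]
        have hbsq := gf3_sq (b i) (hbne i)
        linear_combination (-(c (i-1) * g ((a0:ℕ) : ZMod k) l)) * hbsq
      · have hvm : v (i - 1) = 0 := by
          simp only [hvdef]; rw [dif_neg hca]
        have hvp : v (i + 1) = 0 := by
          simp only [hvdef]; rw [dif_neg]
          rintro ⟨l', hl', heq⟩
          apply hca
          by_cases hl0 : l' = 0
          · refine ⟨m - 1, by omega, ?_⟩
            subst hl0
            rw [hposcast] at heq ⊢
            have e : ((m - 1 : ℕ) : ZMod k) = ((m:ℕ) : ZMod k) - 1 := by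
              push_cast [Nat.cast_sub (by omega : 1 ≤ m)]
              ring
            rw [e]
            linear_combination heq + h2m
          · refine ⟨l' - 1, by omega, ?_⟩
            rw [hposcast] at heq ⊢
            have e : ((l' - 1 : ℕ) : ZMod k) = ((l':ℕ) : ZMod k) - 1 := by
              push_cast [Nat.cast_sub (by omega : 1 ≤ l')]
              ring
            rw [e]
            linear_combination heq
        rw [hvm, hvp, mul_zero, mul_zero, add_zero]
    have hvne : v ≠ 0 := by
      intro h
      have h0 : v (((a0 + 2*0 : ℕ) : ZMod k)) = g ((a0:ℕ) : ZMod k) 0 := hvval 0 (by omega)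
      rw [h] at h0
      simp [hg] at h0
    have hkerspan : LinearMap.ker M.mulVecLin = Submodule.span (ZMod 3) {v} := by
      apply le_antisymm
      · intro x hx
        have hx' : M *ᵥ x = 0 := by
          rw [← Matrix.mulVecLin_apply]; exact LinearMap.mem_ker.mp hx
        have hxv : x = x (((a0:ℕ)) : ZMod k) • v := by
          funext j
          obtain ⟨a, l, hal, hlm, hpos⟩ := hdec j
          have ha' : a = a0 ∨ a = a1 := by omega
          rcases ha' with rfl | rfl
          · rw [Pi.smul_apply, smul_eq_mul, ← hpos, hvval l hlm, hposcast,
              K1 x hx' _ l]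
            ring
          · rw [Pi.smul_apply, smul_eq_mul, ← hpos, hvout l hlm, mul_zero, hposcast,
              K1 x hx' _ l, hx1 x hx', mul_zero]
        rw [hxv]
        exact Submodule.smul_mem _ _ (Submodule.mem_span_singleton_self v)
      · rw [Submodule.span_singleton_le_iff_mem]
        exact LinearMap.mem_ker.mpr (by rw [Matrix.mulVecLin_apply]; exact hvker)
    have hranknull := LinearMap.finrank_range_add_finrank_ker M.mulVecLin
    rw [hkerspan, finrank_span_singleton hvne, hdim] at hranknull
    have hrk : M.rank + 1 = k := by rw [Matrix.rank]; exact hranknull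
    obtain ⟨s, hs⟩ := heven
    omega
  · -- ODD CASE
    have hdbl : ∀ e : ZMod k, 2 * e = 0 → e = 0 := by
      intro e he
      have hvcast : ((2 * e.val : ℕ) : ZMod k) = 0 := by
        push_cast
        rw [ZMod.natCast_rightInverse e]
        exact he
      rw [ZMod.natCast_eq_zero_iff] at hvcast
      obtain ⟨s, hs⟩ := hvcast
      have hvlt := e.val_lt
      have hs2 : s < 2 := by nlinarith
      have hval0 : e.val = 0 := by
        interval_cases s
        · omega
        · obtain ⟨w, hw⟩ := hkodd; omega
      have hre := ZMod.natCast_rightInverse e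
      rw [← hre, hval0]
      simp
    have hbij : Function.Bijective (fun i : ZMod k => 2 * i + 1) := by
      apply Finite.injective_iff_bijective.mp
      intro d d' h
      simp only [] at h
      have h2' : 2 * (d - d') = 0 := by linear_combination h
      exact sub_eq_zero.mp (hdbl _ h2')
    have G0k : g 0 k = -1 := by
      have e1 : g 0 k = ∏ t ∈ Finset.range k, ρ (2 * ((t:ℕ) : ZMod k) + 1) := by
        simp only [hg, zero_add]
      rw [e1, prod_range_zmod k (fun z => ρ (2 * z + 1))]
      have hdblprod : ∏ i : ZMod k, ρ (2 * i + 1) = ∏ i : ZMod k, ρ i :=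
        Fintype.prod_bijective _ hbij (fun i => ρ (2 * i + 1)) ρ (fun x => rfl)
      rw [hdblprod]
      exact hrm1
    have hker0 : ∀ x, M *ᵥ x = 0 → x = 0 := by
      intro x hx
      have hx0 : x 0 = 0 := by
        have h' := K1 x hx 0 k
        rw [ZMod.natCast_self, mul_zero, add_zero, G0k] at h'
        exact gf3_neg_self _ (by linear_combination h')
      funext j
      obtain ⟨d, hd⟩ := hbij.surjective (j + 1)
      simp only [] at hd
      have hdj : 2 * d = j := by linear_combination hd
      have h' := K1 x hx 0 d.val
      rw [ZMod.natCast_rightInverse d, zero_add, hdj, hx0, mul_zero] at h'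
      rw [h']
      simp
    have hkerbot : LinearMap.ker M.mulVecLin = ⊥ := by
      rw [LinearMap.ker_eq_bot']
      intro x hx
      exact hker0 x (by rw [← Matrix.mulVecLin_apply]; exact hx)
    have hranknull := LinearMap.finrank_range_add_finrank_ker M.mulVecLin
    rw [hkerbot, finrank_bot, add_zero, hdim] at hranknull
    have hrk : M.rank = k := by rw [Matrix.rank]; exact hranknull
    obtain ⟨w, hw⟩ := hkodd
    obtain ⟨s, hs⟩ := heven
    omega

private theorem alt_even_rank_aux : ∀ (r : ℕ) (m : Type) [Fintype m] [DecidableEq m]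
    (B : Matrix m m (ZMod 3)),
    B.rank ≤ r → (∀ i j, B j i = -B i j) → Even B.rank := by
  intro r
  induction r with
  | zero => intro m _ _ B hr _; simp [Nat.le_zero.mp hr]
  | succ r ih =>
    intro m _ _ B hr hskew
    have hdiag : ∀ i, B i i = 0 := fun i => gf3_neg_self _ (hskew i i)
    by_cases hB : ∀ i j, B i j = 0
    · have : B = 0 := by ext i j; exact hB i j
      rw [this, Matrix.rank_zero]; exact Even.zero
    push_neg at hB
    obtain ⟨i, j, hc⟩ := hB
    set c := B i j with hcdef
    have hcinv : c⁻¹ * c = 1 := inv_mul_cancel₀ hc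
    set u : m → ZMod 3 := fun k => B k i with hu
    set v : m → ZMod 3 := fun k => B k j with hv
    set M : Matrix m m (ZMod 3) :=
      Matrix.of (fun k l => c⁻¹ * (B k j * B i l - B k i * B j l)) with hM
    set B' := B - M with hB'
    -- rows i, j of B' vanish
    have hrowi : ∀ l, B' i l = 0 := by
      intro l
      simp only [hB', hM, Matrix.sub_apply, Matrix.of_apply]
      rw [hdiag i, ← hcdef, zero_mul, sub_zero, ← mul_assoc, hcinv, one_mul, sub_self]
    have hrowj : ∀ l, B' j l = 0 := by
      intro l
      simp only [hB', hM, Matrix.sub_apply, Matrix.of_apply]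
      rw [hdiag j, hskew i j, ← hcdef]
      have h9 : (0:ZMod 3) * B i l - -c * B j l = c * B j l := by ring
      rw [h9, ← mul_assoc, hcinv, one_mul, sub_self]
    have hskew' : ∀ k l, B' l k = -B' k l := by
      intro k l
      simp only [hB', hM, Matrix.sub_apply, Matrix.of_apply]
      rw [hskew k l, hskew j l, hskew i l, hskew j k, hskew i k]
      ring
    -- M *ᵥ x is a combination of u and v
    have hMv : ∀ x : m → ZMod 3, M *ᵥ x =
        (c⁻¹ * ∑ l, B i l * x l) • v + (-(c⁻¹ * ∑ l, B j l * x l)) • u := by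
      intro x
      funext k
      simp only [Matrix.mulVec, dotProduct, hM, Matrix.of_apply, Pi.add_apply,
        Pi.smul_apply, smul_eq_mul, hu, hv]
      simp only [Finset.sum_mul, neg_mul, Finset.mul_sum, ← Finset.sum_neg_distrib,
        ← Finset.sum_add_distrib]
      exact Finset.sum_congr rfl fun l _ => by ring
    have memu : u ∈ LinearMap.range B.mulVecLin := by
      refine ⟨Pi.single i 1, ?_⟩
      funext k
      simp [Matrix.mulVecLin_apply, Matrix.mulVec, dotProduct, Pi.single_apply, hu]
    have memv : v ∈ LinearMap.range B.mulVecLin := by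
      refine ⟨Pi.single j 1, ?_⟩
      funext k
      simp [Matrix.mulVecLin_apply, Matrix.mulVec, dotProduct, Pi.single_apply, hv]
    set U := LinearMap.range B'.mulVecLin with hU
    set Sp : Submodule (ZMod 3) (m → ZMod 3) := Submodule.span (ZMod 3) {u, v} with hSp
    have hSple : Sp ≤ LinearMap.range B.mulVecLin := by
      rw [hSp, Submodule.span_le]
      rintro w (rfl | rfl)
      · exact memu
      · exact memv
    have humem : u ∈ Sp := Submodule.subset_span (by simp)
    have hvmem : v ∈ Sp := Submodule.subset_span (by simp)
    have hrange : LinearMap.range B.mulVecLin = U ⊔ Sp := by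
      apply le_antisymm
      · rintro y ⟨x, rfl⟩
        have hx : B.mulVecLin x = B'.mulVecLin x + M *ᵥ x := by
          simp only [Matrix.mulVecLin_apply, hB', Matrix.sub_mulVec]
          abel
        rw [hx]
        apply Submodule.add_mem
        · exact Submodule.mem_sup_left ⟨x, rfl⟩
        · apply Submodule.mem_sup_right
          rw [hMv x]
          exact Submodule.add_mem _ (Submodule.smul_mem _ _ hvmem) (Submodule.smul_mem _ _ humem)
      · apply sup_le _ hSple
        rintro y ⟨x, rfl⟩
        have hx : B'.mulVecLin x = B.mulVecLin x - M *ᵥ x := by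
          simp only [Matrix.mulVecLin_apply, hB', Matrix.sub_mulVec]
        rw [hx]
        apply Submodule.sub_mem
        · exact ⟨x, rfl⟩
        · rw [hMv x]
          exact Submodule.add_mem _ (Submodule.smul_mem _ _ (hSple hvmem))
            (Submodule.smul_mem _ _ (hSple humem))
    -- elements of U vanish at coordinates i and j
    have hUvanish : ∀ y ∈ U, y i = 0 ∧ y j = 0 := by
      rintro y ⟨x, rfl⟩
      constructor
      · simp only [Matrix.mulVecLin_apply, Matrix.mulVec, dotProduct]
        exact Finset.sum_eq_zero fun l _ => by rw [hrowi l, zero_mul]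
      · simp only [Matrix.mulVecLin_apply, Matrix.mulVec, dotProduct]
        exact Finset.sum_eq_zero fun l _ => by rw [hrowj l, zero_mul]
    have hinf : U ⊓ Sp = ⊥ := by
      rw [eq_bot_iff]
      rintro y ⟨hyU, hySp⟩
      obtain ⟨a, b, rfl⟩ := Submodule.mem_span_pair.mp hySp
      obtain ⟨h1, h2⟩ := hUvanish _ hyU
      simp only [Pi.add_apply, Pi.smul_apply, smul_eq_mul, hu, hv] at h1 h2
      rw [hdiag i] at h1
      rw [hdiag j, hskew i j] at h2
      have ha : a = 0 := by
        have : a * -c = 0 := by linear_combination h2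
        rcases mul_eq_zero.mp this with h | h
        · exact h
        · exact absurd (neg_eq_zero.mp h) hc
      have hb : b = 0 := by
        have : b * c = 0 := by linear_combination h1
        rcases mul_eq_zero.mp this with h | h
        · exact h
        · exact absurd h hc
      simp [ha, hb, Submodule.mem_bot]
    -- u, v linearly independent
    have hli : LinearIndependent (ZMod 3) ![u, v] := by
      rw [LinearIndependent.pair_iff]
      intro s t hst
      have h1 : s * B j i + t * B j j = 0 := by
        have := congrFun hst j
        simpa [hu, hv] using this
      have h2 : s * B i i + t * B i j = 0 := by
        have := congrFun hst i
        simpa [hu, hv] using this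
      rw [hdiag j, hskew i j, ← hcdef] at h1
      rw [hdiag i, ← hcdef] at h2
      constructor
      · have : s * -c = 0 := by linear_combination h1
        rcases mul_eq_zero.mp this with h | h
        · exact h
        · exact absurd (neg_eq_zero.mp h) hc
      · have : t * c = 0 := by linear_combination h2
        rcases mul_eq_zero.mp this with h | h
        · exact h
        · exact absurd h hc
    have hSp2 : Module.finrank (ZMod 3) Sp = 2 := by
      have hre : Sp = Submodule.span (ZMod 3) (Set.range ![u, v]) := by
        rw [hSp]; congr 1; ext w; simp [Matrix.range_cons]; tauto
      rw [hre, finrank_span_eq_card hli]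
      simp
    have hranksum : B.rank = B'.rank + 2 := by
      have := Submodule.finrank_sup_add_finrank_inf_eq U Sp
      rw [hinf] at this
      simp only [finrank_bot, add_zero] at this
      rw [Matrix.rank, hrange, this, Matrix.rank, hSp2]
    have hB'le : B'.rank ≤ r := by omega
    obtain ⟨mm, hm⟩ := ih m B' hB'le hskew'
    rw [hranksum, hm]
    exact ⟨mm + 1, by ring⟩


private lemma pair_injective {m : ℕ} (i j : Fin m) (hij : i ≠ j) : Function.Injective ![j, i] := by
  intro x y hxy
  fin_cases x <;> fin_cases y <;> simp_all [Matrix.cons_val_zero, Matrix.cons_val_one]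

private lemma walk_prefix {V : Type*} {G : SimpleGraph V} {u v : V} (w : G.Walk u v) (a : ℕ) :
    ∃ p : G.Walk u (w.getVert a), p.length ≤ a := by
  induction w generalizing a with
  | nil => exact ⟨SimpleGraph.Walk.nil, by simp [SimpleGraph.Walk.getVert]⟩
  | @cons x y z h q ih =>
    cases a with
    | zero =>
      exact ⟨SimpleGraph.Walk.nil.copy rfl (by simp), by simp⟩
    | succ a =>
      obtain ⟨p, hp⟩ := ih a
      exact ⟨(p.cons h).copy rfl (by rw [SimpleGraph.Walk.getVert_cons_succ]),
        by simpa using Nat.succ_le_succ hp⟩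

private lemma walk_suffix {V : Type*} {G : SimpleGraph V} {u v : V} (w : G.Walk u v) (a : ℕ) :
    ∃ p : G.Walk (w.getVert a) v, p.length ≤ w.length - a := by
  induction w generalizing a with
  | nil => exact ⟨SimpleGraph.Walk.nil.copy (by simp [SimpleGraph.Walk.getVert]) rfl, by simp⟩
  | @cons x y z h q ih =>
    cases a with
    | zero =>
      exact ⟨(q.cons h).copy (by simp) rfl, by simp⟩
    | succ a =>
      obtain ⟨p, hp⟩ := ih a
      refine ⟨p.copy (by rw [SimpleGraph.Walk.getVert_cons_succ]) rfl, ?_⟩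
      rw [SimpleGraph.Walk.length_copy, SimpleGraph.Walk.length_cons]
      omega

private lemma telescope_prod (h : ℕ → ZMod 3) (hsq : ∀ c, h c * h c = 1) (d : ℕ) :
    ∏ c ∈ Finset.range d, (h c * h (c+1)) = h 0 * h d := by
  induction d with
  | zero => exact (hsq 0).symm
  | succ d ih =>
    rw [Finset.prod_range_succ, ih]
    have := hsq d
    linear_combination (h 0 * h (d+1)) * this

private lemma rank_single (a : ZMod 3) (ha : a ≠ 0) (C : Matrix (Fin 2) (Fin 2) (ZMod 3))
    (h00 : C 0 0 = 0) (h10 : C 1 0 = 0) (h11 : C 1 1 = 0) (h01 : C 0 1 = a) :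
    ¬ Even C.rank := by
  have hvec : ∀ x : Fin 2 → ZMod 3, C *ᵥ x = (a * x 1) • (Pi.single 0 1 : Fin 2 → ZMod 3) := by
    intro x
    funext r
    fin_cases r <;>
      simp [Matrix.mulVec, dotProduct, Fin.sum_univ_two, h00, h10, h11, h01,
        Pi.single_apply]
  have hsingle : (Pi.single 0 1 : Fin 2 → ZMod 3) ≠ 0 := by
    intro h
    have := congrFun h 0
    simp [Pi.single_apply] at this
  have hrange : LinearMap.range C.mulVecLin
      = Submodule.span (ZMod 3) {(Pi.single 0 1 : Fin 2 → ZMod 3)} := by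
    apply le_antisymm
    · rintro y ⟨x, rfl⟩
      rw [Matrix.mulVecLin_apply, hvec]
      exact Submodule.smul_mem _ _ (Submodule.mem_span_singleton_self _)
    · rw [Submodule.span_singleton_le_iff_mem]
      refine ⟨Pi.single 1 a⁻¹, ?_⟩
      rw [Matrix.mulVecLin_apply, hvec]
      simp [mul_inv_cancel₀ ha]
  have hrk : C.rank = 1 := by
    rw [Matrix.rank, hrange, finrank_span_singleton hsingle]
  rw [hrk]
  simp

private theorem fwd_core : ∀ (n : ℕ) (A : Matrix (Fin n) (Fin n) (ZMod 3)),
    (∀ (k : ℕ) (f : Fin k → Fin n), Function.Injective f → Even (A.submatrix f f).rank) →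
    ∃ t : Fin n → ZMod 3, (∀ i, t i = 1 ∨ t i = -1) ∧
      ∀ i j, A j i = -(t i * t j) * A i j := by
  intro n
  induction n with
  | zero =>
    intro A _
    exact ⟨fun _ => 1, fun i => Or.inl rfl, fun i j => i.elim0⟩
  | succ n ih =>
    intro A hyp
    classical
    -- diagonal vanishes
    have hdiag : ∀ i, A i i = 0 := by
      intro i
      by_contra h
      have hinj : Function.Injective (fun _ : Fin 1 => i) := fun a b _ => Subsingleton.elim a b
      have heven := hyp 1 (fun _ => i) hinj
      have hunit : IsUnit (A.submatrix (fun _ : Fin 1 => i) (fun _ : Fin 1 => i)) := by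
        rw [Matrix.isUnit_iff_isUnit_det, Matrix.det_fin_one]
        exact (isUnit_iff_ne_zero).mpr h
      rw [Matrix.rank_of_isUnit _ hunit] at heven
      simp at heven
    -- symmetry of vanishing
    have hsymm : ∀ i j : Fin (n+1), A i j = 0 → A j i = 0 := by
      intro i j h
      by_contra hne
      have hij : i ≠ j := by
        intro hh; subst hh; exact hne h
      have hinj : Function.Injective ![j, i] := pair_injective i j hij
      have heven := hyp 2 ![j, i] hinj
      refine rank_single (A j i) hne (A.submatrix ![j, i] ![j, i]) ?_ ?_ ?_ ?_ heven <;>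
        simp [Matrix.submatrix_apply, hdiag, h]
    -- restriction to the first n vertices
    set A' : Matrix (Fin n) (Fin n) (ZMod 3) := A.submatrix Fin.castSucc Fin.castSucc with hA'def
    have hyp' : ∀ (k : ℕ) (f : Fin k → Fin n), Function.Injective f →
        Even (A'.submatrix f f).rank := by
      intro k f hf
      rw [hA'def, Matrix.submatrix_submatrix]
      exact hyp k (Fin.castSucc ∘ f) ((Fin.castSucc_injective n).comp hf)
    obtain ⟨t', ht'u, ht'r⟩ := ih A' hyp'
    have ht'ne : ∀ i, t' i ≠ 0 := by
      intro i; rcases ht'u i with h | h <;> rw [h] <;> decide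
    have ht'sq : ∀ i, t' i * t' i = 1 := fun i => gf3_sq _ (ht'ne i)
    -- the graph on the first n vertices
    set G : SimpleGraph (Fin n) :=
      { Adj := fun i j => i ≠ j ∧ A' i j ≠ 0,
        symm := ⟨by
          rintro i j ⟨hne, ha⟩
          exact ⟨hne.symm, fun h => ha (hsymm _ _ h)⟩⟩,
        loopless := ⟨fun i h => h.1 rfl⟩ } with hGdef
    have hGadj : ∀ i j : Fin n, G.Adj i j ↔ i ≠ j ∧ A' i j ≠ 0 := fun i j => Iff.rfl
    set S : Fin n → Prop := fun i => A (Fin.castSucc i) (Fin.last n) ≠ 0 with hSdef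
    set val : Fin n → ZMod 3 :=
      fun i => -(A (Fin.castSucc i) (Fin.last n) * A (Fin.last n) (Fin.castSucc i)) * t' i
      with hvaldef
    have hSsymm : ∀ i, S i → A (Fin.last n) (Fin.castSucc i) ≠ 0 := by
      intro i hi h
      exact hi (hsymm _ _ h)
    have hvalne : ∀ i, S i → val i ≠ 0 := by
      intro i hi
      exact mul_ne_zero (neg_ne_zero.mpr (mul_ne_zero hi (hSsymm i hi))) (ht'ne i)
    have hvalsq : ∀ i, S i → val i * val i = 1 := fun i hi => gf3_sq _ (hvalne i hi)
    have hvalu : ∀ i, S i → (val i = 1 ∨ val i = -1) := fun i hi => gf3_cases _ (hvalne i hi)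
    have hadjval : ∀ i j, G.Adj i j → -(A' i j * A' j i) = t' i * t' j := by
      rintro i j ⟨hne, ha⟩
      have hsq := gf3_sq (A' i j) ha
      linear_combination (-(A' i j)) * ht'r i j + (t' i * t' j) * hsq
    have claimC : ∀ L : ℕ, ∀ i j : Fin n, ∀ w : G.Walk i j,
        w.length ≤ L → S i → S j → val i = val j := by
      intro L
      induction L using Nat.strong_induction_on with
      | _ L IH =>
      intro i j w hL hi hj
      by_cases hij : i = j
      · subst hij; rfl
      have hlen1 : 1 ≤ w.length := by
        rcases Nat.eq_zero_or_pos w.length with h | h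
        · exact absurd (SimpleGraph.Walk.eq_of_length_eq_zero h) hij
        · exact h
      by_cases hrep : ∃ a b : ℕ, a < b ∧ b ≤ w.length ∧ w.getVert a = w.getVert b
      · obtain ⟨a, b, hab, hble, heq⟩ := hrep
        obtain ⟨p, hp⟩ := walk_prefix w a
        obtain ⟨q, hq⟩ := walk_suffix w b
        refine IH (L - 1) (by omega) i j (p.append (q.copy heq.symm rfl)) ?_ hi hj
        rw [SimpleGraph.Walk.length_append, SimpleGraph.Walk.length_copy]
        omega
      push_neg at hrep
      by_cases hchord : ∃ a b : ℕ, a + 2 ≤ b ∧ b ≤ w.length ∧ G.Adj (w.getVert a) (w.getVert b)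
      · obtain ⟨a, b, hab, hble, hadj⟩ := hchord
        obtain ⟨p, hp⟩ := walk_prefix w a
        obtain ⟨q, hq⟩ := walk_suffix w b
        refine IH (L - 1) (by omega) i j (p.append (SimpleGraph.Walk.cons hadj q)) ?_ hi hj
        rw [SimpleGraph.Walk.length_append, SimpleGraph.Walk.length_cons]
        omega
      push_neg at hchord
      by_cases hmid : ∃ cp : ℕ, 0 < cp ∧ cp < w.length ∧ S (w.getVert cp)
      · obtain ⟨cp, hcp0, hcpl, hScp⟩ := hmid
        obtain ⟨p, hp⟩ := walk_prefix w cp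
        obtain ⟨q, hq⟩ := walk_suffix w cp
        exact (IH (L-1) (by omega) i _ p (by omega) hi hScp).trans
          (IH (L-1) (by omega) _ j q (by omega) hScp hj)
      push_neg at hmid
      -- chordless cycle case
      set d := w.length with hd
      set k := d + 2 with hkdef
      haveI : NeZero k := ⟨by omega⟩
      have hdlt : ∀ z : ZMod k, z.val < d + 2 := fun z => z.val_lt
      have hcv : ∀ p : ℕ, p < k → ((p : ZMod k)).val = p := fun p hp => ZMod.val_natCast_of_lt hp
      have hzv : ∀ z : ZMod k, ((z.val : ℕ) : ZMod k) = z := fun z => ZMod.natCast_rightInverse z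
      set ψ : ZMod k → Fin (n+1) := fun z =>
        if z.val ≤ d then Fin.castSucc (w.getVert z.val) else Fin.last n with hψdef
      have hψle : ∀ z : ZMod k, z.val ≤ d → ψ z = Fin.castSucc (w.getVert z.val) := by
        intro z h; simp only [hψdef]; rw [if_pos h]
      have hψgt : ∀ z : ZMod k, ¬(z.val ≤ d) → ψ z = Fin.last n := by
        intro z h; simp only [hψdef]; rw [if_neg h]
      have hgvne : ∀ a b : ℕ, a ≤ d → b ≤ d → a ≠ b → w.getVert a ≠ w.getVert b := by
        intro a b ha hb hne
        rcases Nat.lt_or_ge a b with h | h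
        · exact hrep a b h hb
        · have h' : b < a := by omega
          exact fun hh => (hrep b a h' ha) hh.symm
      have hψinj : Function.Injective ψ := by
        intro z z' h
        by_cases hp : z.val ≤ d <;> by_cases hq : z'.val ≤ d
        · rw [hψle z hp, hψle z' hq] at h
          have h2 := Fin.castSucc_injective n h
          have hvv : z.val = z'.val := by
            by_contra hne
            exact hgvne _ _ hp hq hne h2
          rw [← hzv z, ← hzv z', hvv]
        · rw [hψle z hp, hψgt z' hq] at h
          exact absurd h (Fin.castSucc_lt_last _).ne
        · rw [hψgt z hp, hψle z' hq] at h
          exact absurd h.symm (Fin.castSucc_lt_last _).ne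
        · have hvv : z.val = z'.val := by have h1 := hdlt z; have h2 := hdlt z'; omega
          rw [← hzv z, ← hzv z', hvv]
      have hcard : Fintype.card (Fin k) = Fintype.card (ZMod k) := by simp [ZMod.card]
      set e : Fin k ≃ ZMod k := Fintype.equivOfCardEq hcard with hedef
      have hMeven : Even (A.submatrix ψ ψ).rank := by
        have h1 := hyp k (ψ ∘ e) (hψinj.comp e.injective)
        have h2 : A.submatrix (ψ ∘ ⇑e) (ψ ∘ ⇑e) = (A.submatrix ψ ψ).submatrix e e := by
          rw [Matrix.submatrix_submatrix]
        rw [h2, Matrix.rank_submatrix] at h1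
        exact h1
      have hsucc : ∀ z : ZMod k, z.val + 1 < k → (z + 1).val = z.val + 1 := by
        intro z hz
        have h1 : z + 1 = ((z.val + 1 : ℕ) : ZMod k) := by
          conv_lhs => rw [← hzv z]
          push_cast
          ring
        rw [h1, hcv _ hz]
      have hwrapadd : ∀ z : ZMod k, z.val = d + 1 → z + 1 = 0 := by
        intro z hz
        conv_lhs => rw [← hzv z, hz]
        rw [show ((d + 1 : ℕ) : ZMod k) + 1 = ((d + 2 : ℕ) : ZMod k) by push_cast; ring]
        rw [show d + 2 = k from rfl, ZMod.natCast_self]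
      have hedge : ∀ z : ZMod k, A (ψ z) (ψ (z+1)) ≠ 0 ∧ A (ψ (z+1)) (ψ z) ≠ 0 := by
        intro z
        rcases Nat.lt_trichotomy z.val d with hlt | heqd | hgt
        · have h1 := hsucc z (by omega)
          rw [hψle z (by omega), hψle (z+1) (by omega), h1]
          have hadj := w.adj_getVert_succ (by omega : z.val < w.length)
          exact ⟨hadj.2, hadj.symm.2⟩
        · have h1 : (z+1).val = d + 1 := by rw [hsucc z (by omega), heqd]
          rw [hψle z (by omega), hψgt (z+1) (by omega), heqd]
          have hgvd : w.getVert d = j := w.getVert_length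
          rw [hgvd]
          exact ⟨hj, hSsymm j hj⟩
        · have hz1 : z.val = d + 1 := by have h2 := hdlt z; omega
          have h0 : z + 1 = 0 := hwrapadd z hz1
          rw [hψgt z (by omega), h0, hψle 0 (by rw [ZMod.val_zero]; omega)]
          rw [ZMod.val_zero, SimpleGraph.Walk.getVert_zero]
          exact ⟨hSsymm i hi, hi⟩
      have hzero : ∀ z z' : ZMod k, z' ≠ z + 1 → z ≠ z' + 1 → A (ψ z) (ψ z') = 0 := by
        intro z z' hne1 hne2
        by_cases hzz : z = z'
        · rw [hzz]
          exact hdiag _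
        have hpv := hdlt z
        have hqv := hdlt z'
        have hz : z = ((z.val : ℕ) : ZMod k) := (hzv z).symm
        have hz' : z' = ((z'.val : ℕ) : ZMod k) := (hzv z').symm
        have hpq : z.val ≠ z'.val := by
          intro h
          apply hzz
          rw [hz, hz', h]
        have hsuc1 : z'.val ≠ z.val + 1 := by
          intro h
          apply hne1
          rw [hz', h]
          conv_rhs => rw [hz]
          push_cast
          ring
        have hsuc2 : z.val ≠ z'.val + 1 := by
          intro h
          apply hne2
          rw [hz, h]
          conv_rhs => rw [hz']
          push_cast
          ring
        have hwrap1 : ¬(z.val = d + 1 ∧ z'.val = 0) := by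
          rintro ⟨h1, h2⟩
          apply hne1
          rw [hwrapadd z h1, hz', h2]
          simp
        have hwrap2 : ¬(z'.val = d + 1 ∧ z.val = 0) := by
          rintro ⟨h1, h2⟩
          apply hne2
          rw [hwrapadd z' h1, hz, h2]
          simp
        by_cases hp : z.val ≤ d <;> by_cases hq : z'.val ≤ d
        · rw [hψle z hp, hψle z' hq]
          by_contra habs
          have hgne : w.getVert z.val ≠ w.getVert z'.val := hgvne _ _ hp hq hpq
          have hadj : G.Adj (w.getVert z.val) (w.getVert z'.val) := ⟨hgne, habs⟩
          rcases Nat.lt_or_ge z.val z'.val with h | h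
          · exact hchord z.val z'.val (by omega) (by omega) hadj
          · exact hchord z'.val z.val (by omega) (by omega) hadj.symm
        · have hq1 : z'.val = d + 1 := by omega
          rw [hψle z hp, hψgt z' (by omega)]
          have hpd : z.val ≠ d := by intro h; exact hsuc1 (by omega)
          have hp0 : z.val ≠ 0 := by intro h; exact hwrap2 ⟨hq1, h⟩
          exact not_not.mp (hmid z.val (by omega) (by omega))
        · have hp1 : z.val = d + 1 := by omega
          rw [hψgt z (by omega), hψle z' hq]
          have hqd : z'.val ≠ d := by intro h; exact hsuc2 (by omega)
          have hq0 : z'.val ≠ 0 := by intro h; exact hwrap1 ⟨hp1, h⟩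
          exact hsymm _ _ (not_not.mp (hmid z'.val (by omega) (by omega)))
        · exact absurd (by omega : z.val = z'.val) hpq
      have hprod := cycle_rank k (by omega) (A.submatrix ψ ψ)
        (fun z => (hedge z).1) (fun z => (hedge z).2) (fun z z' h1 h2 => hzero z z' h1 h2) hMeven
      have hF := (prod_range_zmod k
        (fun z => -(A (ψ z) (ψ (z+1)) * A (ψ (z+1)) (ψ z)))).trans hprod
      replace hF : (∏ c ∈ Finset.range ((d+1)+1),
          -(A (ψ (c : ZMod k)) (ψ ((c : ZMod k)+1)) * A (ψ ((c : ZMod k)+1)) (ψ (c : ZMod k)))) = 1 := hF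
      rw [Finset.prod_range_succ, Finset.prod_range_succ] at hF
      have hsucccast : ∀ c : ℕ, ((c : ZMod k)) + 1 = ((c+1 : ℕ) : ZMod k) := by
        intro c; push_cast; ring
      have hcast_le : ∀ c : ℕ, c ≤ d → ψ ((c : ZMod k)) = Fin.castSucc (w.getVert c) := by
        intro c hc
        have hv : ((c : ZMod k)).val = c := hcv c (by omega)
        rw [hψle _ (by rw [hv]; omega), hv]
      have hlastψ : ψ ((d+1 : ℕ) : ZMod k) = Fin.last n := by
        rw [hψgt _ (by rw [hcv (d+1) (by omega)]; omega)]
      have hFc : ∀ c : ℕ, c < d →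
          -(A (ψ (c : ZMod k)) (ψ ((c : ZMod k) + 1)) * A (ψ ((c : ZMod k)+1)) (ψ (c : ZMod k)))
          = t' (w.getVert c) * t' (w.getVert (c+1)) := by
        intro c hc
        rw [hsucccast c, hcast_le c (by omega), hcast_le (c+1) (by omega)]
        exact hadjval _ _ (w.adj_getVert_succ (by omega : c < w.length))
      rw [Finset.prod_congr rfl (fun c hc => hFc c (Finset.mem_range.mp hc))] at hF
      rw [telescope_prod (fun c => t' (w.getVert c)) (fun c => ht'sq _) d] at hF
      have hgv0 : w.getVert 0 = i := w.getVert_zero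
      have hgvd : w.getVert d = j := w.getVert_length
      rw [hgv0, hgvd] at hF
      rw [hsucccast d, hcast_le d le_rfl, hlastψ] at hF
      have h0ψ : ((d+1 : ℕ) : ZMod k) + 1 = 0 := hwrapadd _ (hcv (d+1) (by omega))
      rw [h0ψ] at hF
      have hψ0 : ψ (0 : ZMod k) = Fin.castSucc i := by
        rw [hψle 0 (by rw [ZMod.val_zero]; omega), ZMod.val_zero, hgv0]
      rw [hψ0, hgvd] at hF
      have hQ : val i * val j = 1 := by
        simp only [hvaldef]
        linear_combination hF
      have hsqj := hvalsq j hj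
      linear_combination val j * hQ - val i * hsqj
    -- assemble the sign vector
    have hreachval : ∀ i j, S i → S j → G.Reachable i j → val i = val j := by
      intro i j hi hj hr
      obtain ⟨w⟩ := hr
      exact claimC w.length i j w le_rfl hi hj
    set η : Fin n → ZMod 3 := fun i =>
      if h : ∃ j0 : Fin n, S j0 ∧ G.Reachable j0 i then val h.choose else 1 with hηdef
    have hη_val : ∀ i j0, S j0 → G.Reachable j0 i → η i = val j0 := by
      intro i j0 hj0 hr
      have hex : ∃ j' : Fin n, S j' ∧ G.Reachable j' i := ⟨j0, hj0, hr⟩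
      simp only [hηdef]
      rw [dif_pos hex]
      exact hreachval _ _ hex.choose_spec.1 hj0 (hex.choose_spec.2.trans hr.symm)
    have hη_none : ∀ i, ¬(∃ j0 : Fin n, S j0 ∧ G.Reachable j0 i) → η i = 1 := by
      intro i h
      simp only [hηdef]
      rw [dif_neg h]
    have hη_unit : ∀ i, η i = 1 ∨ η i = -1 := by
      intro i
      by_cases h : ∃ j0 : Fin n, S j0 ∧ G.Reachable j0 i
      · simp only [hηdef]
        rw [dif_pos h]
        exact hvalu _ h.choose_spec.1
      · rw [hη_none i h]; left; rfl
    have hη_sq : ∀ i, η i * η i = 1 := by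
      intro i
      rcases hη_unit i with h | h <;> rw [h] <;> decide
    have hη_adj : ∀ i j, G.Adj i j → η i = η j := by
      intro i j hadj
      by_cases h : ∃ j0 : Fin n, S j0 ∧ G.Reachable j0 i
      · obtain ⟨j0, hS0, hr⟩ := h
        rw [hη_val i j0 hS0 hr, hη_val j j0 hS0 (hr.trans hadj.reachable)]
      · have h' : ¬(∃ j0 : Fin n, S j0 ∧ G.Reachable j0 j) := by
          rintro ⟨j0, hS0, hr⟩
          exact h ⟨j0, hS0, hr.trans hadj.symm.reachable⟩
        rw [hη_none i h, hη_none j h']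
    set t : Fin (n+1) → ZMod 3 := Fin.lastCases 1 (fun i => η i * t' i) with htdef
    have htcast : ∀ i : Fin n, t (Fin.castSucc i) = η i * t' i := by
      intro i
      simp only [htdef]
      exact Fin.lastCases_castSucc ..
    have htlast : t (Fin.last n) = 1 := by
      simp only [htdef]
      exact Fin.lastCases_last ..
    have htS : ∀ i, S i → t (Fin.castSucc i)
        = -(A (Fin.castSucc i) (Fin.last n) * A (Fin.last n) (Fin.castSucc i)) := by
      intro i hi
      rw [htcast, hη_val i i hi (SimpleGraph.Reachable.refl i)]
      simp only [hvaldef]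
      have := ht'sq i
      linear_combination (-(A (Fin.castSucc i) (Fin.last n) * A (Fin.last n) (Fin.castSucc i))) *
        this
    refine ⟨t, ?_, ?_⟩
    · intro i'
      refine Fin.lastCases ?_ ?_ i'
      · rw [htlast]; left; rfl
      · intro i; rw [htcast]; exact gf3_mul_unit _ _ (hη_unit i) (ht'u i)
    · intro i' j'
      refine Fin.lastCases ?_ (fun ii => ?_) i'
      · refine Fin.lastCases ?_ (fun jj => ?_) j'
        · rw [hdiag, htlast]; ring
        · -- i' = last, j' = castSucc jj
          by_cases hS : S jj
          · rw [htS jj hS, htlast]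
            have hsq := gf3_sq _ (hSsymm jj hS)
            linear_combination (-(A (Fin.castSucc jj) (Fin.last n))) * hsq
          · have h1 : A (Fin.castSucc jj) (Fin.last n) = 0 := not_not.mp hS
            have h2 : A (Fin.last n) (Fin.castSucc jj) = 0 := hsymm _ _ h1
            rw [h1, h2]; ring
      · refine Fin.lastCases ?_ (fun jj => ?_) j'
        · -- i' = castSucc ii, j' = last
          by_cases hS : S ii
          · rw [htS ii hS, htlast]
            have hsq := gf3_sq _ hS
            linear_combination (-(A (Fin.last n) (Fin.castSucc ii))) * hsq
          · have h1 : A (Fin.castSucc ii) (Fin.last n) = 0 := not_not.mp hS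
            have h2 : A (Fin.last n) (Fin.castSucc ii) = 0 := hsymm _ _ h1
            rw [h1, h2]; ring
        · -- both castSucc
          have hAe : ∀ p q : Fin n, A (Fin.castSucc p) (Fin.castSucc q) = A' p q := by
            intro p q; rw [hA'def]; rfl
          rw [hAe, hAe, htcast, htcast]
          by_cases h0 : A' ii jj = 0
          · have h0' : A' jj ii = 0 := by
              rw [hA'def] at h0 ⊢
              exact hsymm _ _ h0
            rw [h0, h0']; ring
          · have hne : ii ≠ jj := by
              intro hh; subst hh
              exact h0 (by rw [hA'def]; exact hdiag _)
            have hadj : G.Adj ii jj := ⟨hne, h0⟩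
            rw [hη_adj ii jj hadj]
            linear_combination ht'r ii jj + (t' ii * t' jj * A' ii jj) * hη_sq jj

theorem even_principal_ranks_iff_skew_up_to_signs_GF3 {n : ℕ}
    (A : Matrix (Fin n) (Fin n) (ZMod 3)) :
    (∀ I : Finset (Fin n),
      Even ((A.submatrix (fun i : I => (i : Fin n)) (fun j : I => (j : Fin n))).rank)) ↔
    ∃ (d1 d2 : Fin n → ZMod 3),
      (∀ i, d1 i = 1 ∨ d1 i = -1) ∧ (∀ i, d2 i = 1 ∨ d2 i = -1) ∧
      (Matrix.diagonal d1 * A * Matrix.diagonal d2)ᵀ =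
        -(Matrix.diagonal d1 * A * Matrix.diagonal d2) ∧
      (∀ i, (Matrix.diagonal d1 * A * Matrix.diagonal d2) i i = 0) := by
  classical
  constructor
  · intro hFin
    have hyp : ∀ (k : ℕ) (f : Fin k → Fin n), Function.Injective f →
        Even (A.submatrix f f).rank := by
      intro k f hf
      set I : Finset (Fin n) := Finset.image f Finset.univ with hI
      have hmem : ∀ a : Fin k, f a ∈ I := fun a => Finset.mem_image_of_mem f (Finset.mem_univ a)
      set g : Fin k → {x // x ∈ I} := fun a => ⟨f a, hmem a⟩ with hg
      have hbij : Function.Bijective g := by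
        constructor
        · intro a b h
          exact hf (congrArg Subtype.val h)
        · rintro ⟨x, hx⟩
          obtain ⟨a, _, ha⟩ := Finset.mem_image.mp hx
          exact ⟨a, Subtype.ext ha⟩
      set e := Equiv.ofBijective g hbij with he
      have h2 : (A.submatrix (fun i : I => (i : Fin n)) (fun j : I => (j : Fin n))).submatrix e e
          = A.submatrix f f := by
        ext a b
        simp [Matrix.submatrix_apply, he, hg, Equiv.ofBijective]
      have h3 := hFin I
      rw [← h2, Matrix.rank_submatrix]
      exact h3
    obtain ⟨t, htu, htr⟩ := fwd_core n A hyp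
    have htsq : ∀ i, t i * t i = 1 := by
      intro i; rcases htu i with h | h <;> rw [h] <;> decide
    have hl : ∀ x y, (Matrix.diagonal t * A * Matrix.diagonal (fun _ : Fin n => (1:ZMod 3))) x y
        = t x * A x y := by
      intro x y
      rw [Matrix.mul_diagonal, Matrix.diagonal_mul]
      ring
    refine ⟨t, fun _ => 1, htu, fun _ => Or.inl rfl, ?_, ?_⟩
    · ext x y
      simp only [Matrix.transpose_apply, Matrix.neg_apply]
      rw [hl, hl]
      linear_combination t y * htr x y - (t x * A x y) * htsq y
    · intro i
      have h0 : A i i = 0 := by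
        have h1 := htr i i
        have h2 := htsq i
        exact gf3_neg_self (A i i) (by linear_combination h1 - (A i i) * h2)
      rw [hl, h0, mul_zero]
  · rintro ⟨d1, d2, hd1, hd2, hskewT, hdiag0⟩
    intro I
    set B := Matrix.diagonal d1 * A * Matrix.diagonal d2 with hB
    have hBskew : ∀ x y : Fin n, B y x = -B x y := by
      intro x y
      have h := congrFun (congrFun hskewT x) y
      simpa [Matrix.transpose_apply, Matrix.neg_apply] using h
    have hBapply : ∀ x y, B x y = d1 x * A x y * d2 y := by
      intro x y
      rw [hB, Matrix.mul_diagonal, Matrix.diagonal_mul]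
    have hd1ne : ∀ x, d1 x ≠ 0 := fun x => by rcases hd1 x with h|h <;> rw [h] <;> decide
    have hd2ne : ∀ x, d2 x ≠ 0 := fun x => by rcases hd2 x with h|h <;> rw [h] <;> decide
    set AI := A.submatrix (fun i : I => (i : Fin n)) (fun j : I => (j : Fin n)) with hAI
    set BI := B.submatrix (fun i : I => (i : Fin n)) (fun j : I => (j : Fin n)) with hBI
    have hBIeq : BI = Matrix.diagonal (fun x : I => d1 x) * AI
        * Matrix.diagonal (fun x : I => d2 x) := by
      ext a b
      rw [Matrix.mul_diagonal, Matrix.diagonal_mul, hBI, Matrix.submatrix_apply, hBapply, hAI,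
        Matrix.submatrix_apply]
    have hdet1 : IsUnit (Matrix.diagonal (fun x : I => d1 x)).det := by
      rw [Matrix.det_diagonal]
      exact isUnit_iff_ne_zero.mpr (Finset.prod_ne_zero_iff.mpr fun x _ => hd1ne x)
    have hdet2 : IsUnit (Matrix.diagonal (fun x : I => d2 x)).det := by
      rw [Matrix.det_diagonal]
      exact isUnit_iff_ne_zero.mpr (Finset.prod_ne_zero_iff.mpr fun x _ => hd2ne x)
    have hrank : BI.rank = AI.rank := by
      rw [hBIeq, Matrix.rank_mul_eq_left_of_isUnit_det _ _ hdet2,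
        Matrix.rank_mul_eq_right_of_isUnit_det _ _ hdet1]
    have hBIskew : ∀ a b : {x // x ∈ I}, BI b a = -BI a b := by
      intro a b
      simp only [hBI, Matrix.submatrix_apply]
      exact hBskew _ _
    have heven := alt_even_rank_aux BI.rank {x // x ∈ I} BI le_rfl hBIskew
    rw [hrank] at heven
    exact heven
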